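/- arXiv:math/0505461 — 4 statements merged into one kernel-verified Lean document; each statement's English description precedes it below -/
import Mathlib

section
/- Let U ⊆ ℝ² be open, let u : U → ℝ be harmonic on U (u is C² with Δu = 0 on U), and let α = (α₁, α₂) : U → ℝ² be such that, identifying ℝ² with ℂ, the function α₁ + iα₂ is holomorphic on U. Then the vector field |∇u|² α − 2(α·∇u)∇u is divergence-free on U: div(|∇u|² α − 2(α·∇u)∇u) = 0 at every point of U. -/
open MeasureTheory Filter Set
open scoped ENNReal Topology Real NNReal

noncomputable section

/-- Parametrization of the graph `t ↦ (t, φ t)`, as a point of `ℂ ≃ ℝ²`. -/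
def bmap (φ : ℝ → ℝ) (t : ℝ) : ℂ := ⟨t, φ t⟩

/-- The Lipschitz graph domain `Ω = {(x₁,x₂) : x₂ > φ(x₁)}`. -/
def gDomain (φ : ℝ → ℝ) : Set ℂ := {z : ℂ | φ z.re < z.im}

/-- The boundary `∂Ω` of the graph domain. -/
def gBdry (φ : ℝ → ℝ) : Set ℂ := {z : ℂ | z.im = φ z.re}

/-- The Dirichlet portion `D = {(x₁, φ x₁) : x₁ < 0}` of the boundary. -/
def Dside (φ : ℝ → ℝ) : Set ℂ := {z : ℂ | z.im = φ z.re ∧ z.re < 0}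

/-- The Neumann portion `N = {(x₁, φ x₁) : x₁ ≥ 0}` of the boundary. -/
def Nside (φ : ℝ → ℝ) : Set ℂ := {z : ℂ | z.im = φ z.re ∧ 0 ≤ z.re}

/-- Arc length measure `dσ` on `∂Ω`: the pushforward of `√(1+φ'(t)²) dt`. -/
def sigma0 (φ : ℝ → ℝ) : Measure ℂ :=
  Measure.map (bmap φ)
    (volume.withDensity fun t => ENNReal.ofReal (Real.sqrt (1 + deriv φ t ^ 2)))

/-- Weighted arc length `dσ_ε = |x|^ε dσ` on `∂Ω`. -/
def sigmaW (φ : ℝ → ℝ) (ε : ℝ) : Measure ℂ :=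
  (sigma0 φ).withDensity fun x => ENNReal.ofReal (‖x‖ ^ ε)

/-- The open cone `x + {r e^{iθ} : r > 0, |θ - π/2| < θ₀}` with vertex `x`. -/
def ntCone (θ₀ : ℝ) (x : ℂ) : Set ℂ :=
  {z : ℂ | z ≠ x ∧ |Complex.arg (z - x) - π / 2| < θ₀}

/-- The nontangential approach region `Γ(x) ∩ Ω`. -/
def ntRegion (φ : ℝ → ℝ) (θ₀ : ℝ) (x : ℂ) : Set ℂ := ntCone θ₀ x ∩ gDomain φ

/-- The nontangential maximal function `v*(x) = sup_{y ∈ Γ(x)} v(y)` (for `v ≥ 0`),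
valued in `ℝ≥0∞`. -/
def ntMax (φ : ℝ → ℝ) (θ₀ : ℝ) (v : ℂ → ℝ) (x : ℂ) : ℝ≥0∞ :=
  ⨆ y ∈ ntRegion φ θ₀ x, ENNReal.ofReal (v y)

/-- Nontangential limit of `v` at the boundary point `x`. -/
def NTLim (φ : ℝ → ℝ) (θ₀ : ℝ) {α : Type*} [TopologicalSpace α]
    (v : ℂ → α) (x : ℂ) (c : α) : Prop :=
  Filter.Tendsto v (nhdsWithin x (ntRegion φ θ₀ x)) (nhds c)

/-- Gradient of `u : ℂ → ℝ`, written as a point of `ℂ ≃ ℝ²`. -/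
def grad (u : ℂ → ℝ) (z : ℂ) : ℂ := ⟨fderiv ℝ u z 1, fderiv ℝ u z Complex.I⟩

/-- Euclidean dot product on `ℂ ≃ ℝ²`. -/
def dotR (a b : ℂ) : ℝ := a.re * b.re + a.im * b.im

/-- Laplacian of `u : ℂ → ℝ`. -/
def lap (u : ℂ → ℝ) (z : ℂ) : ℝ :=
  fderiv ℝ (fun w => fderiv ℝ u w 1) z 1 + fderiv ℝ (fun w => fderiv ℝ u w Complex.I) z Complex.I

/-- Divergence of the vector field `F : ℂ → ℂ ≃ ℝ²`. -/
def divg (F : ℂ → ℂ) (z : ℂ) : ℝ :=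
  fderiv ℝ (fun w => (F w).re) z 1 + fderiv ℝ (fun w => (F w).im) z Complex.I

/-- `u` is harmonic on `s`. -/
def HarmOn (u : ℂ → ℝ) (s : Set ℂ) : Prop :=
  ContDiffOn ℝ 2 u s ∧ ∀ z ∈ s, lap u z = 0

/-- Outer unit normal `ν = (φ'(x₁), -1)/√(1+φ'(x₁)²)` at a boundary point. -/
def nuVec (φ : ℝ → ℝ) (x : ℂ) : ℂ :=
  (Real.sqrt (1 + deriv φ x.re ^ 2))⁻¹ • (⟨deriv φ x.re, -1⟩ : ℂ)

/-- Unit tangent `T = (1, φ'(x₁))/√(1+φ'(x₁)²)` at a boundary point. -/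
def tanVec (φ : ℝ → ℝ) (x : ℂ) : ℂ :=
  (Real.sqrt (1 + deriv φ x.re ^ 2))⁻¹ • (⟨1, deriv φ x.re⟩ : ℂ)

/-- Branch of the argument with values in `(-π/2, 3π/2]`. -/
def argB (z : ℂ) : ℝ :=
  if Complex.arg z < -(π / 2) then Complex.arg z + 2 * π else Complex.arg z

/-- The branch `z^ε = r^ε e^{iεθ}`, `θ ∈ (-π/2, 3π/2]`, of the complex power,
holomorphic off the closed negative imaginary axis. -/
def cpowB (ε : ℝ) (z : ℂ) : ℂ :=
  ((‖z‖ ^ ε : ℝ) : ℂ) * Complex.exp (Complex.I * ((ε * argB z : ℝ) : ℂ))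

/-- `h` is the arc-length derivative `df/dσ` of `f` along the part of the boundary
parametrized by `t ∈ S`. -/
def HasArcDeriv (φ : ℝ → ℝ) (f h : ℂ → ℝ) (S : Set ℝ) : Prop :=
  ∀ t₁ ∈ S, ∀ t₂ ∈ S,
    IntervalIntegrable (fun t => h (bmap φ t) * Real.sqrt (1 + deriv φ t ^ 2)) volume t₁ t₂ ∧
    f (bmap φ t₂) - f (bmap φ t₁) = ∫ t in t₁..t₂, h (bmap φ t) * Real.sqrt (1 + deriv φ t ^ 2)

/-- Membership in `L^p(S, μ)`. -/
def MemLpB (p : ℝ) (μ : Measure ℂ) (S : Set ℂ) (f : ℂ → ℝ) : Prop :=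
  AEMeasurable f (μ.restrict S) ∧ (∫⁻ x in S, ENNReal.ofReal |f x| ^ p ∂μ) < ⊤

/-- The `L^p(S, μ)` norm. -/
def lpN (p : ℝ) (μ : Measure ℂ) (S : Set ℂ) (f : ℂ → ℝ) : ℝ≥0∞ :=
  (∫⁻ x in S, ENNReal.ofReal |f x| ^ p ∂μ) ^ (1 / p)

/-- The `L^p(μ)` norm of the nontangential maximal function of `v`. -/
def ntMaxLp (φ : ℝ → ℝ) (θ₀ p : ℝ) (μ : Measure ℂ) (v : ℂ → ℝ) : ℝ≥0∞ :=
  (∫⁻ x, ntMax φ θ₀ v x ^ p ∂μ) ^ (1 / p)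

/-- `u` solves the mixed problem for `L^p(μ)` with Dirichlet data `fD` on `D` and
Neumann data `fN` on `N`. -/
def MixedSol (φ : ℝ → ℝ) (θ₀ p : ℝ) (μ : Measure ℂ) (fD fN : ℂ → ℝ) (u : ℂ → ℝ) : Prop :=
  HarmOn u (gDomain φ) ∧
  (∀ᵐ x ∂(sigma0 φ), x ∈ Dside φ → NTLim φ θ₀ u x (fD x)) ∧
  (∃ g : ℂ → ℂ, (∀ᵐ x ∂(sigma0 φ), NTLim φ θ₀ (grad u) x (g x)) ∧
      ∀ᵐ x ∂(sigma0 φ), x ∈ Nside φ → dotR (g x) (nuVec φ x) = fN x) ∧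
  (∫⁻ x, ntMax φ θ₀ (fun y => ‖grad u y‖) x ^ p ∂μ) < ⊤

/-- `u` solves the Neumann problem for `L^p(μ)` with data `f`. -/
def NeumannSol (φ : ℝ → ℝ) (θ₀ p : ℝ) (μ : Measure ℂ) (f : ℂ → ℝ) (u : ℂ → ℝ) : Prop :=
  HarmOn u (gDomain φ) ∧
  (∃ g : ℂ → ℂ, (∀ᵐ x ∂(sigma0 φ), NTLim φ θ₀ (grad u) x (g x)) ∧
      ∀ᵐ x ∂(sigma0 φ), dotR (g x) (nuVec φ x) = f x) ∧
  (∫⁻ x, ntMax φ θ₀ (fun y => ‖grad u y‖) x ^ p ∂μ) < ⊤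

/-- `u` solves the regularity problem for `L^p(μ)` with data `f`. -/
def RegSol (φ : ℝ → ℝ) (θ₀ p : ℝ) (μ : Measure ℂ) (f : ℂ → ℝ) (u : ℂ → ℝ) : Prop :=
  HarmOn u (gDomain φ) ∧
  (∀ᵐ x ∂(sigma0 φ), NTLim φ θ₀ u x (f x)) ∧
  (∃ g : ℂ → ℂ, ∀ᵐ x ∂(sigma0 φ), NTLim φ θ₀ (grad u) x (g x)) ∧
  (∫⁻ x, ntMax φ θ₀ (fun y => ‖grad u y‖) x ^ p ∂μ) < ⊤

/-- An `H¹(dσ_ε)`-atom. -/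
def H1Atom (φ : ℝ → ℝ) (ε : ℝ) (a : ℂ → ℝ) : Prop :=
  ∃ x ∈ gBdry φ, ∃ s : ℝ, 0 < s ∧
    (∀ y, y ∉ Metric.ball x s ∩ gBdry φ → a y = 0) ∧
    (∫ y, a y ∂(sigma0 φ)) = 0 ∧
    ∀ y, |a y| ≤ ((sigmaW φ ε (Metric.ball x s ∩ gBdry φ)).toReal)⁻¹

/-- An atomic representation `f = Σ λ_j a_j` (convergence in `L¹(dσ_ε)`). -/
def H1Rep (φ : ℝ → ℝ) (ε : ℝ) (f : ℂ → ℝ) (lam : ℕ → ℝ) (a : ℕ → ℂ → ℝ) : Prop :=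
  (∀ j, H1Atom φ ε (a j)) ∧ Summable (fun j => |lam j|) ∧
  Filter.Tendsto
    (fun n => ∫⁻ x, ENNReal.ofReal |f x - ∑ j ∈ Finset.range n, lam j * a j x| ∂(sigmaW φ ε))
    Filter.atTop (nhds 0)

def MemH1 (φ : ℝ → ℝ) (ε : ℝ) (f : ℂ → ℝ) : Prop := ∃ lam a, H1Rep φ ε f lam a

def H1norm (φ : ℝ → ℝ) (ε : ℝ) (f : ℂ → ℝ) : ℝ≥0∞ :=
  sInf {c | ∃ lam a, H1Rep φ ε f lam a ∧ c = ∑' j, ENNReal.ofReal |lam j|}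

/-- An `H^{1,1}(dσ_ε)`-atom: an indefinite arc-length integral of an `H¹(dσ_ε)`-atom. -/
def H11Atom (φ : ℝ → ℝ) (ε : ℝ) (A : ℂ → ℝ) : Prop :=
  ∃ a, H1Atom φ ε a ∧ ∃ t₀ : ℝ, ∀ t : ℝ,
    A (bmap φ t) = ∫ s in t₀..t, a (bmap φ s) * Real.sqrt (1 + deriv φ s ^ 2)

def H11Rep (φ : ℝ → ℝ) (ε : ℝ) (F : ℂ → ℝ) (lam : ℕ → ℝ) (A : ℕ → ℂ → ℝ) : Prop :=
  (∀ j, H11Atom φ ε (A j)) ∧ Summable (fun j => |lam j|) ∧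
  ∀ᵐ x ∂(sigma0 φ), HasSum (fun j => lam j * A j x) (F x)

def MemH11 (φ : ℝ → ℝ) (ε : ℝ) (F : ℂ → ℝ) : Prop := ∃ lam A, H11Rep φ ε F lam A

def H11norm (φ : ℝ → ℝ) (ε : ℝ) (F : ℂ → ℝ) : ℝ≥0∞ :=
  sInf {c | ∃ lam A, H11Rep φ ε F lam A ∧ c = ∑' j, ENNReal.ofReal |lam j|}

/-- Membership in `H¹(S, dσ_ε)`: restriction to `S` of an element of `H¹(dσ_ε)`. -/
def MemH1On (φ : ℝ → ℝ) (ε : ℝ) (S : Set ℂ) (f : ℂ → ℝ) : Prop :=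
  ∃ g, MemH1 φ ε g ∧ Set.EqOn f g S

def H1normOn (φ : ℝ → ℝ) (ε : ℝ) (S : Set ℂ) (f : ℂ → ℝ) : ℝ≥0∞ :=
  sInf {c | ∃ g lam a, H1Rep φ ε g lam a ∧ Set.EqOn f g S ∧ c = ∑' j, ENNReal.ofReal |lam j|}

def MemH11On (φ : ℝ → ℝ) (ε : ℝ) (S : Set ℂ) (F : ℂ → ℝ) : Prop :=
  ∃ G, MemH11 φ ε G ∧ Set.EqOn F G S

def H11normOn (φ : ℝ → ℝ) (ε : ℝ) (S : Set ℂ) (F : ℂ → ℝ) : ℝ≥0∞ :=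
  sInf {c | ∃ G lam A, H11Rep φ ε G lam A ∧ Set.EqOn F G S ∧ c = ∑' j, ENNReal.ofReal |lam j|}

/-- An `H¹(N, dσ_ε)`-atom: the restriction to `N` of an `H¹(dσ_ε)`-atom. -/
def H1AtomN (φ : ℝ → ℝ) (ε : ℝ) (a : ℂ → ℝ) : Prop :=
  ∃ b, H1Atom φ ε b ∧ Set.EqOn a b (Nside φ)
/-- L. Escauriaza's identity: if `u` is harmonic on the open set `U ⊆ ℝ² ≃ ℂ`
and `α = (α₁, α₂)` has `α₁ + iα₂` holomorphic on `U`, then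
`div(|∇u|² α − 2(α·∇u)∇u) = 0` at every point of `U`. -/
theorem statement1 (U : Set ℂ) (hU : IsOpen U) (u : ℂ → ℝ) (α : ℂ → ℂ)
    (hu : ContDiffOn ℝ 2 u U) (hΔ : ∀ z ∈ U, lap u z = 0)
    (hα : DifferentiableOn ℂ α U) :
    ∀ z ∈ U,
      divg (fun w => (‖grad u w‖ ^ 2) • α w
        - (2 * dotR (α w) (grad u w)) • grad u w) z = 0 := by
  intro z hz
  have hzU : U ∈ nhds z := hU.mem_nhds hz
  -- α derivative and Cauchy–Riemann
  have hαz : DifferentiableAt ℂ α z := (hα.differentiableAt hzU)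
  set A : ℂ →L[ℝ] ℂ := (fderiv ℂ α z).restrictScalars ℝ with hAdef
  have hA : HasFDerivAt α A z := (hαz.hasFDerivAt).restrictScalars ℝ
  have hCR : A Complex.I = Complex.I * A 1 := by
    show (fderiv ℂ α z) Complex.I = Complex.I * (fderiv ℂ α z) 1
    have := (fderiv ℂ α z).map_smul Complex.I (1:ℂ)
    simpa [smul_eq_mul] using this
  -- second derivative of u
  have hcu : ContDiffAt ℝ 2 u z := hu.contDiffAt hzU
  set B : ℂ →L[ℝ] ℂ →L[ℝ] ℝ := fderiv ℝ (fderiv ℝ u) z with hBdef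
  have hB : HasFDerivAt (fderiv ℝ u) B z := by
    have h := (hcu.fderiv_right (m := 1) (by norm_num)).differentiableAt (by norm_num)
    exact h.hasFDerivAt
  have hsymm : B 1 Complex.I = B Complex.I 1 := by
    have hev : ∀ᶠ y in nhds z, HasFDerivAt u (fderiv ℝ u y) y := by
      filter_upwards [hU.eventually_mem hz] with y hy
      exact ((hu.differentiableOn (by norm_num)).differentiableAt (hU.mem_nhds hy)).hasFDerivAt
    exact second_derivative_symmetric_of_eventually hev hB 1 Complex.I
  -- first partials of u
  have hux : HasFDerivAt (fun w => fderiv ℝ u w 1)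
      ((ContinuousLinearMap.apply ℝ ℝ (1:ℂ)).comp B) z :=
    (ContinuousLinearMap.apply ℝ ℝ (1:ℂ)).hasFDerivAt.comp z hB
  have huy : HasFDerivAt (fun w => fderiv ℝ u w Complex.I)
      ((ContinuousLinearMap.apply ℝ ℝ (Complex.I)).comp B) z :=
    (ContinuousLinearMap.apply ℝ ℝ (Complex.I)).hasFDerivAt.comp z hB
  -- harmonicity at z
  have hlap : B 1 1 + B Complex.I Complex.I = 0 := by
    have h0 := hΔ z hz
    unfold lap at h0
    rw [hux.fderiv, huy.fderiv] at h0
    simpa using h0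
  -- component functions of α
  have ha : HasFDerivAt (fun w => (α w).re) (Complex.reCLM.comp A) z :=
    (Complex.reCLM.hasFDerivAt).comp z hA
  have hb : HasFDerivAt (fun w => (α w).im) (Complex.imCLM.comp A) z :=
    (Complex.imCLM.hasFDerivAt).comp z hA
  -- the two scalar component functions of the vector field
  have hF1 : (fun w => ((‖grad u w‖ ^ 2) • α w
        - (2 * dotR (α w) (grad u w)) • grad u w).re)
      = fun w => (fderiv ℝ u w 1 * fderiv ℝ u w 1
          + fderiv ℝ u w Complex.I * fderiv ℝ u w Complex.I) * (α w).re
        - 2 * ((α w).re * fderiv ℝ u w 1 + (α w).im * fderiv ℝ u w Complex.I)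
            * fderiv ℝ u w 1 := by
    funext w
    simp [Complex.sub_re, Complex.smul_re, Complex.sq_norm, Complex.normSq_apply, grad, dotR]
  have hF2 : (fun w => ((‖grad u w‖ ^ 2) • α w
        - (2 * dotR (α w) (grad u w)) • grad u w).im)
      = fun w => (fderiv ℝ u w 1 * fderiv ℝ u w 1
          + fderiv ℝ u w Complex.I * fderiv ℝ u w Complex.I) * (α w).im
        - 2 * ((α w).re * fderiv ℝ u w 1 + (α w).im * fderiv ℝ u w Complex.I)
            * fderiv ℝ u w Complex.I := by
    funext w
    simp [Complex.sub_im, Complex.smul_im, Complex.sq_norm, Complex.normSq_apply, grad, dotR]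
  have hd1 := (((hux.mul hux).add (huy.mul huy)).mul ha).sub
    (((((ha.mul hux).add (hb.mul huy)).const_mul 2).mul hux))
  have hd2 := (((hux.mul hux).add (huy.mul huy)).mul hb).sub
    (((((ha.mul hux).add (hb.mul huy)).const_mul 2).mul huy))
  unfold divg
  rw [hF1, hF2]
  erw [hd1.fderiv, hd2.fderiv]
  simp only [ContinuousLinearMap.coe_sub', ContinuousLinearMap.coe_add', Pi.sub_apply,
    Pi.add_apply, ContinuousLinearMap.coe_smul', Pi.smul_apply, ContinuousLinearMap.comp_apply,
    ContinuousLinearMap.apply_apply, smul_eq_mul, Complex.reCLM_apply, Complex.imCLM_apply,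
    ContinuousLinearMap.smul_apply, Pi.mul_apply]
  have h1 : (A 1).re = (A Complex.I).im := by rw [hCR]; simp
  have h2 : (A Complex.I).re = -(A 1).im := by rw [hCR]; simp
  have h3 : B Complex.I Complex.I = -(B 1 1) := by linarith
  rw [h1, h2, h3, hsymm]
  ring
end
end

section
/- Let Ω be a Lipschitz graph domain with Lipschitz constant M > 0 and set β = arctan M > 0. For every ε with |ε| < (π − 2β)/(π + 2β) there exist β₀ = β₀(ε, M) with β < β₀ < π/2 and λ ∈ ℝ such that the vector field α(z) = (Re(e^{iλ} z^ε), Im(e^{iλ} z^ε)) satisfies −|x|^ε ≤ α(x)·ν(x) < −|x|^ε · sin(β₀ − β) for a.e. (with respect to arc length) x ∈ ∂Ω. -/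
open MeasureTheory Filter Set
open scoped ENNReal Topology Real NNReal

noncomputable section

private lemma argB_graph (z : ℂ) (h : z.re ≠ 0) :
    argB z = Real.arctan (z.im / z.re) ∨ argB z = Real.arctan (z.im / z.re) + π := by
  have hπ := Real.pi_pos
  rcases lt_or_gt_of_ne h with hre | hre
  · rcases le_or_gt 0 z.im with him | him
    · have h1 : ¬ Complex.arg z ≤ π / 2 := by
        rw [Complex.arg_le_pi_div_two_iff]; push_neg; exact ⟨hre, him⟩
      have h1' := not_le.mp h1
      have h2 := Complex.arg_le_pi z
      have harc : Real.arctan (Real.tan (Complex.arg z - π)) = Complex.arg z - π :=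
        Real.arctan_tan (by linarith) (by linarith)
      have ht : Real.tan (Complex.arg z - π) = z.im / z.re := by
        rw [Real.tan_periodic.sub_eq, Complex.tan_arg]
      right
      rw [argB, if_neg (not_lt.mpr (by linarith))]
      rw [← ht, harc]; ring
    · have h1 : ¬ -(π / 2) ≤ Complex.arg z := by
        rw [Complex.neg_pi_div_two_le_arg_iff]; push_neg; exact ⟨hre, him⟩
      have h1' := not_le.mp h1
      have h2 := Complex.neg_pi_lt_arg z
      have harc : Real.arctan (Real.tan (Complex.arg z + π)) = Complex.arg z + π :=
        Real.arctan_tan (by linarith) (by linarith)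
      have ht : Real.tan (Complex.arg z + π) = z.im / z.re := by
        rw [Real.tan_periodic, Complex.tan_arg]
      right
      rw [argB, if_pos h1', ← ht, harc]; ring
  · have h1 : -(π / 2) < Complex.arg z := Complex.neg_pi_div_two_lt_arg_iff.mpr (Or.inl hre)
    have h2 : Complex.arg z < π / 2 := Complex.arg_lt_pi_div_two_iff.mpr (Or.inl hre)
    left
    rw [argB, if_neg (not_lt.mpr h1.le), ← Complex.tan_arg, Real.arctan_tan h1 h2]

/-- construction of the holomorphic vector field `α(z) = e^{iλ} z^ε` with
`−|x|^ε ≤ α·ν < −|x|^ε sin(β₀ − β)` a.e. on `∂Ω`. -/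
theorem statement2 (φ : ℝ → ℝ) (M : ℝ)
    (hφ : ∀ s t, |φ s - φ t| ≤ M * |s - t|) (hφ0 : φ 0 = 0) (hM : 0 < M)
    (ε : ℝ) (hε : |ε| < (π - 2 * Real.arctan M) / (π + 2 * Real.arctan M)) :
    ∃ β₀ lam : ℝ, Real.arctan M < β₀ ∧ β₀ < π / 2 ∧
      ∀ᵐ x ∂(sigma0 φ),
        -(‖x‖ ^ ε) ≤ dotR (Complex.exp (Complex.I * lam) * cpowB ε x) (nuVec φ x) ∧
        dotR (Complex.exp (Complex.I * lam) * cpowB ε x) (nuVec φ x)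
          < -(‖x‖ ^ ε * Real.sin (β₀ - Real.arctan M)) := by
  have hπ := Real.pi_pos
  set β := Real.arctan M with hβdef
  have hβpos : 0 < β := by
    rw [hβdef, ← Real.arctan_zero]; exact Real.arctan_strictMono hM
  have hβlt : β < π / 2 := Real.arctan_lt_pi_div_two M
  set E := |ε| with hEdef
  have hEnn : 0 ≤ E := abs_nonneg ε
  have hden : 0 < π + 2 * β := by linarith
  have hE : E * (π + 2 * β) < π - 2 * β := (lt_div_iff₀ hden).mp hε
  set c := (π - E * (π + 2 * β)) / 2 with hcdef
  have hEnn2 : 0 ≤ E * (π + 2 * β) := mul_nonneg hEnn hden.le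
  have hβc : β < c := by rw [hcdef]; linarith
  have hcle : c ≤ π / 2 := by rw [hcdef]; linarith
  set β₀ := (β + c) / 2 with hβ₀def
  set lam := π / 2 - ε * (π / 2) with hlamdef
  have hβ₀1 : β < β₀ := by rw [hβ₀def]; linarith
  have hβ₀2 : β₀ < π / 2 := by rw [hβ₀def]; linarith
  have hβ₀c : β₀ < c := by rw [hβ₀def]; linarith
  refine ⟨β₀, lam, hβ₀1, hβ₀2, ?_⟩
  -- Lipschitz facts
  have hLip : LipschitzWith (Real.toNNReal M) φ := by
    apply LipschitzWith.of_dist_le_mul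
    intro s t
    rw [Real.coe_toNNReal M hM.le]
    simpa [Real.dist_eq] using hφ s t
  have hφc : Continuous φ := hLip.continuous
  have hbmeq : bmap φ = fun t : ℝ => (t : ℂ) + (φ t : ℂ) * Complex.I := by
    funext t
    apply Complex.ext <;> simp [bmap]
  have hbm : Measurable (bmap φ) := by
    rw [hbmeq]
    exact (Complex.continuous_ofReal.add
      ((Complex.continuous_ofReal.comp hφc).mul continuous_const)).measurable
  -- the bad set
  set Bad : Set ℝ := {t | ¬ DifferentiableAt ℝ φ t} ∪ {0} with hBaddef
  have hBadm : MeasurableSet Bad :=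
    ((measurableSet_of_differentiableAt ℝ φ).compl).union (measurableSet_singleton 0)
  have hBad0 : volume Bad = 0 := by
    apply measure_union_null
    · exact ae_iff.mp (hLip.ae_differentiableAt (μ := volume))
    · exact measure_singleton 0
  set T : Set ℂ := {z : ℂ | z.re ∈ Bad ∨ z.im ≠ φ z.re} with hTdef
  have hTm : MeasurableSet T := by
    apply (hBadm.preimage Complex.measurable_re).union
    exact (measurableSet_eq_fun Complex.measurable_im
      (hφc.measurable.comp Complex.measurable_re)).compl
  have hT0 : sigma0 φ T = 0 := by
    rw [sigma0, Measure.map_apply hbm hTm]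
    have hpre : bmap φ ⁻¹' T = Bad := by
      ext t
      simp only [Set.mem_preimage, hTdef, Set.mem_setOf_eq, bmap]
      constructor
      · rintro (h | h)
        · exact h
        · exact absurd rfl h
      · exact fun h => Or.inl h
    rw [hpre]
    exact (withDensity_absolutelyContinuous volume _) hBad0
  rw [ae_iff]
  refine measure_mono_null ?_ hT0
  intro z hz
  simp only [Set.mem_setOf_eq] at hz
  by_contra hzT
  apply hz
  rw [hTdef, Set.mem_setOf_eq] at hzT
  push_neg at hzT
  obtain ⟨hzBad, hzim⟩ := hzT
  rw [hBaddef] at hzBad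
  simp only [Set.mem_union, Set.mem_setOf_eq, Set.mem_singleton_iff] at hzBad
  push_neg at hzBad
  obtain ⟨hdiff, hre0⟩ := hzBad
  -- pointwise situation
  set d := deriv φ z.re with hddef
  have hdM : |d| ≤ M := by
    have h2 : ‖fderiv ℝ φ z.re‖ ≤ M := by
      simpa [Real.coe_toNNReal M hM.le] using
        norm_fderiv_le_of_lipschitz (x₀ := z.re) ℝ hLip
    have h3 : d = fderiv ℝ φ z.re 1 := rfl
    calc |d| = ‖fderiv ℝ φ z.re 1‖ := by rw [Real.norm_eq_abs, h3]
      _ ≤ ‖fderiv ℝ φ z.re‖ * ‖(1 : ℝ)‖ := (fderiv ℝ φ z.re).le_opNorm 1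
      _ ≤ M := by simpa using h2
  have hq : |z.im / z.re| ≤ M := by
    rw [abs_div, div_le_iff₀ (abs_pos.mpr hre0)]
    calc |z.im| = |φ z.re - φ 0| := by rw [hφ0, sub_zero, hzim]
      _ ≤ M * |z.re - 0| := hφ z.re 0
      _ = M * |z.re| := by rw [sub_zero]
  have harctan_le : ∀ x : ℝ, |x| ≤ M → |Real.arctan x| ≤ β := by
    intro x hx
    rw [abs_le] at hx ⊢
    refine ⟨?_, Real.arctan_strictMono.monotone hx.2⟩
    rw [hβdef, ← Real.arctan_neg]
    exact Real.arctan_strictMono.monotone hx.1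
  set γ := Real.arctan d with hγdef
  have hγ : |γ| ≤ β := harctan_le d hdM
  set θ := argB z with hθdef
  have hθb : |θ - π / 2| ≤ π / 2 + β := by
    have hg : |Real.arctan (z.im / z.re)| ≤ β := harctan_le _ hq
    rw [abs_le] at hg ⊢
    rcases argB_graph z hre0 with h | h <;> rw [hθdef, h] <;>
      constructor <;> linarith [hg.1, hg.2]
  have hz0 : z ≠ 0 := fun h => hre0 (by rw [h]; rfl)
  have hR : 0 < ‖z‖ ^ ε := Real.rpow_pos_of_pos (norm_pos_iff.mpr hz0) ε
  set R := ‖z‖ ^ ε with hRdef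
  set ψ := lam + ε * θ with hψdef
  -- the field computation
  have hα : Complex.exp (Complex.I * lam) * cpowB ε z
      = (R : ℂ) * (↑(Real.cos ψ) + ↑(Real.sin ψ) * Complex.I) := by
    rw [cpowB]
    rw [show ((Real.cos ψ : ℂ) + ↑(Real.sin ψ) * Complex.I) = Complex.exp (↑ψ * Complex.I) by
      rw [Complex.exp_mul_I, Complex.ofReal_cos, Complex.ofReal_sin]]
    rw [← hθdef, ← hRdef]
    calc Complex.exp (Complex.I * lam) * ((R : ℂ) * Complex.exp (Complex.I * ((ε * θ : ℝ) : ℂ)))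
        = (R : ℂ) * Complex.exp (Complex.I * lam + Complex.I * ((ε * θ : ℝ) : ℂ)) := by
          rw [Complex.exp_add]; ring
      _ = (R : ℂ) * Complex.exp (↑ψ * Complex.I) := by
          congr 1
          rw [hψdef]
          push_cast
          ring
  have hre : (Complex.exp (Complex.I * lam) * cpowB ε z).re = R * Real.cos ψ := by
    rw [hα]; simp [Complex.cos_ofReal_re]
  have him2 : (Complex.exp (Complex.I * lam) * cpowB ε z).im = R * Real.sin ψ := by
    rw [hα]; simp [Complex.sin_ofReal_re]
  set s := Real.sqrt (1 + d ^ 2) with hsdef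
  have hs : (0 : ℝ) < s := Real.sqrt_pos.mpr (by positivity)
  have hnre : (nuVec φ z).re = s⁻¹ * d := by
    rw [nuVec, Complex.smul_re]; rfl
  have hnim : (nuVec φ z).im = s⁻¹ * (-1) := by
    rw [nuVec, Complex.smul_im]; rfl
  set A := ε * (θ - π / 2) - γ with hAdef
  have hdot : dotR (Complex.exp (Complex.I * lam) * cpowB ε z) (nuVec φ z)
      = -(R * Real.cos A) := by
    rw [dotR, hre, him2, hnre, hnim]
    have h1 : -(R * Real.cos A) = -(R * Real.sin (ψ - γ)) := by
      have : ψ - γ = π / 2 + A := by rw [hAdef, hψdef, hlamdef]; ring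
      rw [this, Real.sin_add, Real.sin_pi_div_two, Real.cos_pi_div_two]
      ring
    rw [h1, Real.sin_sub, hγdef, Real.sin_arctan, Real.cos_arctan, ← hsdef]
    field_simp
    ring
  have hA : |A| ≤ E * (π / 2 + β) + β := by
    have h1 : |ε * (θ - π / 2)| ≤ E * (π / 2 + β) := by
      rw [abs_mul, ← hEdef]
      exact mul_le_mul_of_nonneg_left hθb hEnn
    have h2 := abs_add_le (ε * (θ - π / 2)) (-γ)
    rw [abs_neg] at h2
    calc |A| = |ε * (θ - π / 2) + -γ| := by rw [hAdef, sub_eq_add_neg]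
      _ ≤ |ε * (θ - π / 2)| + |γ| := h2
      _ ≤ E * (π / 2 + β) + β := add_le_add h1 hγ
  have hhalf : E * (π / 2 + β) * 2 = E * (π + 2 * β) := by ring
  have hkey : E * (π / 2 + β) + β < π / 2 - (β₀ - β) := by
    have hc2 : c * 2 = π - E * (π + 2 * β) := by rw [hcdef]; ring
    linarith [hβ₀c, hhalf, hc2]
  constructor
  · rw [hdot]
    have h1 : R * Real.cos A ≤ R := mul_le_of_le_one_right hR.le (Real.cos_le_one A)
    linarith
  · rw [hdot]
    have hcos : Real.sin (β₀ - β) < Real.cos A := by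
      rw [← Real.cos_pi_div_two_sub, ← Real.cos_abs A]
      have hmemA : |A| ∈ Set.Icc 0 π := ⟨abs_nonneg A, by linarith [abs_nonneg A]⟩
      have hmemb : π / 2 - (β₀ - β) ∈ Set.Icc 0 π := ⟨by linarith, by linarith⟩
      exact Real.strictAntiOn_cos hmemA hmemb (by linarith)
    have := mul_lt_mul_of_pos_left hcos hR
    linarith
end
end

section
/- Let Ω be a Lipschitz graph domain, and suppose u is harmonic in Ω, the nontangential maximal function (∇u)* is in L¹_loc(∂Ω, dσ), and either the nontangential limit of u is 0 at σ-a.e. point of ∂Ω, or ∇u has nontangential limits σ-a.e. with ∂u/∂ν = 0 a.e. on ∂Ω. Then for every bounded set B ⊂ Ω, the gradient ∇u belongs to L²(B). -/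
open MeasureTheory Filter Set
open scoped ENNReal Topology Real NNReal

noncomputable section

/-- Auxiliary: argument of a point in the upper half plane. -/
theorem s5_arg_mk_of_pos {a b : ℝ} (hb : 0 < b) :
    Complex.arg ⟨a, b⟩ = π / 2 - Real.arctan (a / b) := by
  set x := a / b with hx
  have hs : (0:ℝ) < Real.sqrt (1 + x ^ 2) := Real.sqrt_pos.2 (by positivity)
  set r : ℝ := b * Real.sqrt (1 + x ^ 2) with hr
  have hrpos : 0 < r := by positivity
  set θ : ℝ := π / 2 - Real.arctan x with hθdef
  have harc := Real.arctan_mem_Ioo x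
  have hθIoc : θ ∈ Set.Ioc (-π) π := by
    constructor
    · rw [hθdef]; nlinarith [Real.pi_pos, harc.1, harc.2]
    · rw [hθdef]; nlinarith [Real.pi_pos, harc.1, harc.2]
  have hcos : r * Real.cos θ = a := by
    rw [hθdef, Real.cos_pi_div_two_sub, Real.sin_arctan]
    rw [hr]
    field_simp
    rw [hx]; field_simp
  have hsin : r * Real.sin θ = b := by
    rw [hθdef, Real.sin_pi_div_two_sub, Real.cos_arctan]
    rw [hr]; field_simp
  have hw : (⟨a, b⟩ : ℂ) = (r : ℂ) * (Complex.cos θ + Complex.sin θ * Complex.I) := by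
    rw [Complex.mk_eq_add_mul_I, ← hcos, ← hsin, ← Complex.ofReal_cos, ← Complex.ofReal_sin]
    push_cast
    ring
  rw [hw, Complex.arg_mul_cos_add_sin_mul_I hrpos hθIoc]

/-- Auxiliary: points almost directly above a boundary point lie in the nontangential cone. -/
theorem s5_mem_cone (φ : ℝ → ℝ) (M θ₀ c : ℝ) (hφ : ∀ s t, |φ s - φ t| ≤ M * |s - t|)
    (hM0 : 0 ≤ M) (hθ₀ : 0 < θ₀) (hθh : θ₀ < π / 2)
    (hcpos : 0 < c) (hkey : c < Real.tan θ₀ * (1 - M * c)) (hMc2 : M * c ≤ 1 / 2)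
    (z : ℂ) (s : ℝ) (hz : φ z.re < z.im)
    (hs : |z.re - s| ≤ c * (z.im - φ z.re)) :
    z ∈ ntRegion φ θ₀ (bmap φ s) := by
  set T := Real.tan θ₀ with hT
  have hTpos : 0 < T := Real.tan_pos_of_pos_of_lt_pi_div_two hθ₀ hθh
  set dz := z.im - φ z.re with hdz
  have hdzpos : 0 < dz := by rw [hdz]; linarith
  set a := z.re - s with ha
  set v := z.im - φ s with hv
  have hφs : |φ z.re - φ s| ≤ M * |a| := hφ _ _
  have hveq : v = dz + (φ z.re - φ s) := by rw [hv, hdz]; ring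
  have hvlow : (1 - M * c) * dz ≤ v := by
    have h1 : -(M * |a|) ≤ φ z.re - φ s := neg_le_of_abs_le hφs
    have h2 : M * |a| ≤ M * (c * dz) := mul_le_mul_of_nonneg_left hs hM0
    rw [hveq]; nlinarith
  have hvpos : 0 < v := lt_of_lt_of_le (by nlinarith) hvlow
  have haT : |a| < T * v := by
    calc |a| ≤ c * dz := hs
    _ < T * (1 - M * c) * dz := by nlinarith
    _ ≤ T * v := by nlinarith
  have hsub : z - bmap φ s = ⟨a, v⟩ := by
    apply Complex.ext <;> simp [bmap, ha, hv]
  refine ⟨⟨?_, ?_⟩, hz⟩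
  · intro h
    have : z.im = φ s := by rw [h]; rfl
    rw [hv, this] at hvpos; simp at hvpos
  · rw [hsub, s5_arg_mk_of_pos hvpos]
    have hratio : |a / v| < T := by
      rw [abs_div, abs_of_pos hvpos, div_lt_iff₀ hvpos]; linarith
    have habs := abs_lt.1 hratio
    have h1 : Real.arctan (a / v) < θ₀ := by
      calc Real.arctan (a / v) < Real.arctan T := Real.arctan_strictMono habs.2
      _ = θ₀ := by rw [hT, Real.arctan_tan (by linarith) hθh]
    have h2 : -θ₀ < Real.arctan (a / v) := by
      have h3 : Real.arctan (-T) < Real.arctan (a / v) := Real.arctan_strictMono habs.1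
      rw [Real.arctan_neg, hT, Real.arctan_tan (by linarith) hθh] at h3
      linarith
    rw [abs_lt]
    constructor <;> [linarith; linarith]

/-- Auxiliary: the nontangential cone is open. -/
theorem s5_ntCone_isOpen {θ₀ : ℝ} (hθ₀ : 0 < θ₀) (hθh : θ₀ < π / 2) (x : ℂ) :
    IsOpen (ntCone θ₀ x) := by
  rw [isOpen_iff_mem_nhds]
  rintro w ⟨hne, harg⟩
  have hpi : (0:ℝ) < π := Real.pi_pos
  have habs := abs_lt.1 harg
  have h1 : w - x ≠ 0 := sub_ne_zero.2 hne
  have h2 : Complex.arg (w - x) ≠ π := by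
    intro h; rw [h] at habs; have := habs.2; linarith
  have hslit : w - x ∈ Complex.slitPlane := Complex.mem_slitPlane_iff_arg.2 ⟨h2, h1⟩
  have hsubc : ContinuousAt (fun y : ℂ => y - x) w :=
    (continuous_id.sub continuous_const).continuousAt
  have hca : ContinuousAt (fun y : ℂ => |Complex.arg (y - x) - π / 2|) w := by
    have h4 := ContinuousAt.comp (f := fun y : ℂ => y - x) (x := w)
      (Complex.continuousAt_arg hslit) hsubc
    exact (h4.sub continuousAt_const).abs
  have hmem1 : {y : ℂ | |Complex.arg (y - x) - π / 2| < θ₀} ∈ 𝓝 w :=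
    hca.preimage_mem_nhds (Iio_mem_nhds harg)
  have hmem2 : {y : ℂ | y ≠ x} ∈ 𝓝 w := by
    have : IsOpen {y : ℂ | y ≠ x} := isOpen_ne
    exact this.mem_nhds hne
  have := Filter.inter_mem hmem2 hmem1
  exact Filter.mem_of_superset this fun y hy => ⟨hy.1, hy.2⟩


set_option maxHeartbeats 1000000 in
/-- local regularity: if `u` is harmonic in `Ω` with zero Dirichlet or zero
Neumann data and `(∇u)* ∈ L¹_loc(∂Ω, dσ)`, then `∇u ∈ L²(B)` for every bounded `B ⊂ Ω`. -/
theorem statement5 (φ : ℝ → ℝ) (M θ₀ : ℝ)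
    (hφ : ∀ s t, |φ s - φ t| ≤ M * |s - t|) (hφ0 : φ 0 = 0) (hM0 : 0 ≤ M)
    (hθ₀ : 0 < θ₀) (hθ₁ : θ₀ < π / 2 - Real.arctan M)
    (u : ℂ → ℝ) (hu : HarmOn u (gDomain φ))
    (hloc : ∀ K : Set ℂ, IsCompact K →
      (∫⁻ x in K, ntMax φ θ₀ (fun y => ‖grad u y‖) x ∂(sigma0 φ)) < ⊤)
    (hbc : (∀ᵐ x ∂(sigma0 φ), NTLim φ θ₀ u x 0) ∨
      (∃ g : ℂ → ℂ, (∀ᵐ x ∂(sigma0 φ), NTLim φ θ₀ (grad u) x (g x)) ∧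
        ∀ᵐ x ∂(sigma0 φ), dotR (g x) (nuVec φ x) = 0)) :
    ∀ B : Set ℂ, B ⊆ gDomain φ → Bornology.IsBounded B →
      (∫⁻ z in B, ENNReal.ofReal (‖grad u z‖ ^ 2) ∂volume) < ⊤ := by
  classical
  intro B hBΩ hBb
  have hpi : (0:ℝ) < π := Real.pi_pos
  have harct : 0 ≤ Real.arctan M := by
    rw [← Real.arctan_zero]
    exact Real.arctan_strictMono.monotone hM0
  have hθh : θ₀ < π / 2 := by linarith
  set T := Real.tan θ₀ with hT
  have hTpos : 0 < T := Real.tan_pos_of_pos_of_lt_pi_div_two hθ₀ hθh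
  set c := T / (2 * (1 + M * T)) with hc
  have hden : (0:ℝ) < 2 * (1 + M * T) := by nlinarith
  have hcpos : 0 < c := by rw [hc]; positivity
  have hcden : c * (2 * (1 + M * T)) = T := by rw [hc]; field_simp
  have hMc2 : M * c ≤ 1 / 2 := by nlinarith
  have hkey : c < T * (1 - M * c) := by nlinarith
  -- continuity of φ
  have hφcont : Continuous φ := by
    have hl : LipschitzWith (Real.toNNReal M) φ := by
      apply LipschitzWith.of_dist_le_mul
      intro s t
      rw [Real.dist_eq, Real.dist_eq]
      calc |φ s - φ t| ≤ M * |s - t| := hφ s t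
      _ ≤ (Real.toNNReal M) * |s - t| :=
        mul_le_mul_of_nonneg_right (Real.le_coe_toNNReal M) (abs_nonneg _)
    exact hl.continuous
  have hΩopen : IsOpen (gDomain φ) :=
    isOpen_lt (hφcont.comp Complex.continuous_re) Complex.continuous_im
  have hbmapc : Continuous (bmap φ) := by
    have hbm : (bmap φ) = fun t : ℝ => Complex.ofReal t + Complex.ofReal (φ t) * Complex.I := by
      funext t; exact Complex.mk_eq_add_mul_I _ _
    rw [hbm]
    exact Complex.continuous_ofReal.add
      ((Complex.continuous_ofReal.comp hφcont).mul continuous_const)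
  -- measurability and continuity of |grad u|
  have hm1 : Measurable fun z => fderiv ℝ u z 1 := measurable_fderiv_apply_const ℝ u 1
  have hm2 : Measurable fun z => fderiv ℝ u z Complex.I :=
    measurable_fderiv_apply_const ℝ u Complex.I
  have hgradeq : grad u = fun z =>
      ((fderiv ℝ u z 1 : ℝ) : ℂ) + ((fderiv ℝ u z Complex.I : ℝ) : ℂ) * Complex.I := by
    funext z; exact Complex.mk_eq_add_mul_I _ _
  have hgradmeas : Measurable (grad u) := by
    rw [hgradeq]
    exact (Complex.measurable_ofReal.comp hm1).add
      ((Complex.measurable_ofReal.comp hm2).mul_const _)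
  set f : ℂ → ℝ := fun z => ‖grad u z‖ with hfdef
  have hfmeas : Measurable f := continuous_norm.measurable.comp hgradmeas
  have hfnn : ∀ z, 0 ≤ f z := fun z => norm_nonneg _
  have hfc : ContinuousOn f (gDomain φ) := by
    have hfd : ContinuousOn (fderiv ℝ u) (gDomain φ) :=
      hu.1.continuousOn_fderiv_of_isOpen hΩopen (by norm_num)
    have h1 : ContinuousOn (fun z => fderiv ℝ u z 1) (gDomain φ) :=
      hfd.clm_apply continuousOn_const
    have h2 : ContinuousOn (fun z => fderiv ℝ u z Complex.I) (gDomain φ) :=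
      hfd.clm_apply continuousOn_const
    have h3 : ContinuousOn (grad u) (gDomain φ) := by
      rw [hgradeq]
      exact (Complex.continuous_ofReal.comp_continuousOn h1).add
        ((Complex.continuous_ofReal.comp_continuousOn h2).mul continuousOn_const)
    exact continuous_norm.comp_continuousOn h3
  -- the measurable minorant F of the nontangential maximal function
  obtain ⟨D, hDc, hDd⟩ := TopologicalSpace.exists_countable_dense ℂ
  haveI := hDc.to_subtype
  set F : ℂ → ℝ≥0∞ := fun x =>
    ⨆ (y : D), if (y : ℂ) ∈ ntRegion φ θ₀ x then ENNReal.ofReal (f y) else 0 with hFdef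
  have hFmeas : Measurable F := by
    apply Measurable.iSup
    intro y
    by_cases hyΩ : (y : ℂ) ∈ gDomain φ
    · have hset : MeasurableSet {x : ℂ | (y : ℂ) ∈ ntRegion φ θ₀ x} := by
        have heq : {x : ℂ | (y : ℂ) ∈ ntRegion φ θ₀ x}
            = {x : ℂ | (y : ℂ) ≠ x} ∩ {x : ℂ | |Complex.arg ((y : ℂ) - x) - π / 2| < θ₀} := by
          ext x
          simp only [Set.mem_setOf_eq, Set.mem_inter_iff, ntRegion, ntCone, Set.mem_inter_iff,
            Set.mem_setOf_eq]
          tauto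
        rw [heq]
        refine MeasurableSet.inter ?_ ?_
        · exact measurableSet_eq_fun measurable_const measurable_id |>.compl
        · exact measurableSet_lt
            (((Complex.measurable_arg.comp (measurable_const.sub measurable_id)).sub
              measurable_const).abs) measurable_const
      exact Measurable.ite hset measurable_const measurable_const
    · have hz0 : (fun x => if (y : ℂ) ∈ ntRegion φ θ₀ x then ENNReal.ofReal (f y) else 0)
          = fun _ : ℂ => (0 : ℝ≥0∞) := by
        funext x; rw [if_neg]; intro h; exact hyΩ h.2
      rw [hz0]; exact measurable_const
  have hFle : ∀ x, F x ≤ ntMax φ θ₀ f x := by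
    intro x
    apply iSup_le; intro y
    by_cases h : (y : ℂ) ∈ ntRegion φ θ₀ x
    · rw [if_pos h]
      show ENNReal.ofReal (f ↑y) ≤ ⨆ y' ∈ ntRegion φ θ₀ x, ENNReal.ofReal (f y')
      exact le_biSup (fun y' => ENNReal.ofReal (f y')) h
    · rw [if_neg h]; exact zero_le
  have hFge : ∀ z x, z ∈ ntRegion φ θ₀ x → ENNReal.ofReal (f z) ≤ F x := by
    intro z x hz
    have hopen : IsOpen (ntRegion φ θ₀ x) := (s5_ntCone_isOpen hθ₀ hθh x).inter hΩopen
    apply ENNReal.le_of_forall_nnreal_lt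
    intro q hq
    have hqf : (q : ℝ) < f z := by
      by_contra hcon
      push_neg at hcon
      have : ENNReal.ofReal (f z) ≤ (q : ℝ≥0∞) := by
        rw [← ENNReal.ofReal_coe_nnreal]
        exact ENNReal.ofReal_le_ofReal hcon
      exact absurd (lt_of_lt_of_le hq this) (lt_irrefl _)
    have hWopen : IsOpen (gDomain φ ∩ f ⁻¹' Set.Ioi (q : ℝ)) :=
      hfc.isOpen_inter_preimage hΩopen isOpen_Ioi
    have hUopen : IsOpen (ntRegion φ θ₀ x ∩ (gDomain φ ∩ f ⁻¹' Set.Ioi (q : ℝ))) :=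
      hopen.inter hWopen
    have hUne : (ntRegion φ θ₀ x ∩ (gDomain φ ∩ f ⁻¹' Set.Ioi (q : ℝ))).Nonempty :=
      ⟨z, hz, hz.2, hqf⟩
    obtain ⟨y, hyD, hyU⟩ := hDd.exists_mem_open hUopen hUne
    calc (q : ℝ≥0∞) = ENNReal.ofReal (q : ℝ) := (by simp)
    _ ≤ ENNReal.ofReal (f y) := ENNReal.ofReal_le_ofReal (le_of_lt hyU.2.2)
    _ ≤ F x := by
        have hle := le_iSup
          (fun (y' : D) => if (y' : ℂ) ∈ ntRegion φ θ₀ x then ENNReal.ofReal (f y') else 0)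
          (⟨y, hyD⟩ : D)
        rw [if_pos hyU.1] at hle
        exact hle
  -- geometry of the bounded set B
  obtain ⟨r₀, hr₀⟩ := hBb.subset_closedBall 0
  set r := max r₀ 0 with hrdef
  have hr : B ⊆ Metric.closedBall 0 r :=
    hr₀.trans (Metric.closedBall_subset_closedBall (le_max_left _ _))
  have hrnn : (0:ℝ) ≤ r := le_max_right _ _
  set R := r + c * (r + M * r) + 1 with hRdef
  have hRpos : 0 < R := by rw [hRdef]; positivity
  have hBdata : ∀ z ∈ B, |z.re| ≤ r ∧ 0 < z.im - φ z.re ∧ z.im - φ z.re ≤ r + M * r := by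
    intro z hz
    have hzr : ‖z‖ ≤ r := by
      have hmem := hr hz
      rwa [Metric.mem_closedBall, Complex.dist_eq, sub_zero] at hmem
    have h1 : |z.re| ≤ r := (Complex.abs_re_le_norm z).trans hzr
    have h2 : |z.im| ≤ r := (Complex.abs_im_le_norm z).trans hzr
    have h3 : |φ z.re| ≤ M * r := by
      have h4 := hφ z.re 0
      rw [hφ0, sub_zero, sub_zero] at h4
      exact h4.trans (mul_le_mul_of_nonneg_left h1 hM0)
    have h5 := abs_le.1 h1
    have h6 := abs_le.1 h2
    have h7 := abs_le.1 h3
    exact ⟨h1, by have := hBΩ hz; simpa [gDomain] using this, by linarith⟩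
  have hIcc : ∀ z ∈ B, Set.Icc (z.re - c * (z.im - φ z.re)) (z.re + c * (z.im - φ z.re))
      ⊆ Set.Icc (-R) R := by
    intro z hz s hs
    obtain ⟨h1, hdz, h2⟩ := hBdata z hz
    have h5 := abs_le.1 h1
    have hcd : c * (z.im - φ z.re) ≤ c * (r + M * r) := mul_le_mul_of_nonneg_left h2 hcpos.le
    constructor
    · have := hs.1; rw [hRdef]; linarith
    · have := hs.2; rw [hRdef]; linarith
  -- the compact boundary piece and local integrability of F along the boundary
  set K := bmap φ '' Set.Icc (-R) R with hKdef
  have hKcomp : IsCompact K := isCompact_Icc.image hbmapc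
  have hKm : MeasurableSet K := hKcomp.measurableSet
  set w : ℝ → ℝ≥0∞ := fun t => ENNReal.ofReal (Real.sqrt (1 + deriv φ t ^ 2)) with hwdef
  have hwmeas : Measurable w := by
    apply Measurable.ennreal_ofReal
    exact Real.continuous_sqrt.measurable.comp (((measurable_deriv φ).pow_const 2).const_add 1)
  have hw1 : ∀ t, 1 ≤ w t := by
    intro t
    have h1 : (1:ℝ) ≤ Real.sqrt (1 + deriv φ t ^ 2) := by
      have h0 : (1:ℝ) ≤ 1 + deriv φ t ^ 2 := by nlinarith [sq_nonneg (deriv φ t)]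
      calc (1:ℝ) = Real.sqrt 1 := Real.sqrt_one.symm
      _ ≤ Real.sqrt (1 + deriv φ t ^ 2) := Real.sqrt_le_sqrt h0
    calc (1:ℝ≥0∞) = ENNReal.ofReal 1 := by simp
    _ ≤ w t := ENNReal.ofReal_le_ofReal h1
  have hFbm : Measurable fun t => F (bmap φ t) := hFmeas.comp hbmapc.measurable
  set A := ∫⁻ t in Set.Icc (-R) R, F (bmap φ t) ∂volume with hAdef
  have hAfin : A < ⊤ := by
    have step1 : A ≤ ∫⁻ t in Set.Icc (-R) R, (w * fun s => F (bmap φ s)) t ∂volume := by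
      rw [hAdef]; apply lintegral_mono; intro t
      calc F (bmap φ t) = 1 * F (bmap φ t) := (one_mul _).symm
      _ ≤ w t * F (bmap φ t) := mul_le_mul_left (hw1 t) _
    have step2 : ∫⁻ t in Set.Icc (-R) R, (w * fun s => F (bmap φ s)) t ∂volume
        = ∫⁻ t in Set.Icc (-R) R, F (bmap φ t) ∂(volume.withDensity w) := by
      rw [restrict_withDensity measurableSet_Icc,
        lintegral_withDensity_eq_lintegral_mul _ hwmeas hFbm]
    have step3 : ∫⁻ t in Set.Icc (-R) R, F (bmap φ t) ∂(volume.withDensity w)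
        ≤ ∫⁻ t in bmap φ ⁻¹' K, F (bmap φ t) ∂(volume.withDensity w) :=
      lintegral_mono_set (Set.subset_preimage_image _ _)
    have step4 : ∫⁻ t in bmap φ ⁻¹' K, F (bmap φ t) ∂(volume.withDensity w)
        = ∫⁻ x in K, F x ∂(sigma0 φ) := by
      rw [sigma0]
      exact (setLIntegral_map hKm hFmeas hbmapc.measurable).symm
    have step5 : ∫⁻ x in K, F x ∂(sigma0 φ) ≤ ∫⁻ x in K, ntMax φ θ₀ f x ∂(sigma0 φ) :=
      lintegral_mono fun x => hFle x
    calc A ≤ ∫⁻ x in K, ntMax φ θ₀ f x ∂(sigma0 φ) :=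
          ((step1.trans_eq step2).trans step3).trans_eq step4 |>.trans step5
    _ < ⊤ := hloc K hKcomp
  -- pointwise domination
  have hpt : ∀ z ∈ B, ∀ s ∈ Set.Icc (z.re - c * (z.im - φ z.re)) (z.re + c * (z.im - φ z.re)),
      ENNReal.ofReal (f z) ≤ F (bmap φ s) := by
    intro z hz s hs
    apply hFge
    apply s5_mem_cone φ M θ₀ c hφ hM0 hθ₀ hθh hcpos hkey hMc2 z s (hBΩ hz)
    rw [abs_le]
    exact ⟨by linarith [hs.2], by linarith [hs.1]⟩
  -- superlevel sets along the boundary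
  set S : ℝ → Set ℝ :=
    fun t => {s : ℝ | s ∈ Set.Icc (-R) R ∧ ENNReal.ofReal t ≤ F (bmap φ s)} with hSdef
  have hSmeas : ∀ t, MeasurableSet (S t) := by
    intro t
    have : S t = Set.Icc (-R) R ∩ {s | ENNReal.ofReal t ≤ F (bmap φ s)} := rfl
    rw [this]
    exact measurableSet_Icc.inter (measurableSet_le measurable_const hFbm)
  have hSfin : ∀ t, volume (S t) ≠ ⊤ := by
    intro t
    have h1 : volume (S t) ≤ volume (Set.Icc (-R) R) := measure_mono fun s hs => hs.1
    rw [Real.volume_Icc] at h1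
    exact (h1.trans_lt ENNReal.ofReal_lt_top).ne
  have hCheb : ∀ t : ℝ, ENNReal.ofReal t * volume (S t) ≤ A := by
    intro t
    have h1 : volume (S t)
        = (volume.restrict (Set.Icc (-R) R)) {s | ENNReal.ofReal t ≤ F (bmap φ s)} := by
      rw [Measure.restrict_apply (measurableSet_le measurable_const hFbm)]
      congr 1
      ext s
      simp only [hSdef, Set.mem_setOf_eq, Set.mem_inter_iff]
      tauto
    rw [h1]
    exact mul_meas_ge_le_lintegral₀ hFbm.aemeasurable (ENNReal.ofReal t)
  -- the product-measurable superlevel region and the Fubini bound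
  set T2 : Set (ℝ × ℝ) := {p | 0 < p.1 ∧ p.2 ∈ Set.Icc (-R) R
      ∧ ENNReal.ofReal p.1 ≤ F (bmap φ p.2)} with hT2def
  have hT2meas : MeasurableSet T2 := by
    have h1 : MeasurableSet {p : ℝ × ℝ | 0 < p.1} :=
      measurableSet_lt measurable_const measurable_fst
    have h2 : MeasurableSet {p : ℝ × ℝ | p.2 ∈ Set.Icc (-R) R} :=
      measurable_snd measurableSet_Icc
    have h3 : MeasurableSet {p : ℝ × ℝ | ENNReal.ofReal p.1 ≤ F (bmap φ p.2)} :=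
      measurableSet_le measurable_fst.ennreal_ofReal (hFbm.comp measurable_snd)
    exact h1.inter (h2.inter h3)
  have hfub : (volume.prod volume) T2 ≤ A := by
    rw [Measure.prod_apply_symm hT2meas]
    have hb : ∀ s : ℝ, volume ((fun t => (t, s)) ⁻¹' T2)
        ≤ (Set.Icc (-R) R).indicator (fun s' => F (bmap φ s')) s := by
      intro s
      by_cases hsI : s ∈ Set.Icc (-R) R
      · rw [Set.indicator_of_mem hsI]
        by_cases htop : F (bmap φ s) = ⊤
        · rw [htop]; exact le_top
        · have hsub2 : ((fun t => (t, s)) ⁻¹' T2) ⊆ Set.Ioc 0 ((F (bmap φ s)).toReal) := by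
            rintro t ⟨ht0, _, hle⟩
            exact ⟨ht0, (ENNReal.ofReal_le_iff_le_toReal htop).1 hle⟩
          calc volume ((fun t => (t, s)) ⁻¹' T2)
              ≤ volume (Set.Ioc 0 ((F (bmap φ s)).toReal)) := measure_mono hsub2
          _ = ENNReal.ofReal ((F (bmap φ s)).toReal - 0) := Real.volume_Ioc
          _ ≤ F (bmap φ s) := by rw [sub_zero]; exact ENNReal.ofReal_toReal_le
      · have hemp : ((fun t => (t, s)) ⁻¹' T2) = ∅ := by
          ext t
          simp only [Set.mem_preimage, hT2def, Set.mem_setOf_eq, Set.mem_empty_iff_false,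
            iff_false]
          rintro ⟨_, hsI', _⟩
          exact hsI hsI'
        rw [hemp, measure_empty, Set.indicator_of_notMem hsI]
    calc ∫⁻ s, volume ((fun t => (t, s)) ⁻¹' T2) ∂volume
        ≤ ∫⁻ s, (Set.Icc (-R) R).indicator (fun s' => F (bmap φ s')) s ∂volume :=
          lintegral_mono hb
    _ = A := by rw [lintegral_indicator measurableSet_Icc]
  -- the constant
  set C : ℝ≥0∞ := 2 * A * (ENNReal.ofReal (2 * c))⁻¹ with hCdef
  have h2cpos : (0:ℝ) < 2 * c := by linarith
  have hCne : C ≠ ⊤ := by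
    rw [hCdef]
    exact ENNReal.mul_ne_top (ENNReal.mul_ne_top ENNReal.ofNat_ne_top hAfin.ne)
      (ENNReal.inv_ne_top.2 (ENNReal.ofReal_pos.2 h2cpos).ne')
  -- the key distributional bound
  have hbound : ∀ t ∈ Set.Ioi (0:ℝ),
      (volume.restrict B) {a | t ≤ f a} * ENNReal.ofReal (2 * t) ≤ C * volume (S t) := by
    intro t ht
    have ht0 : (0:ℝ) < t := ht
    set V := volume (S t) with hVdef
    set htt := V.toReal / (2 * c) with httdef
    have httnn : 0 ≤ htt := by
      rw [httdef]
      exact div_nonneg ENNReal.toReal_nonneg h2cpos.le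
    set Tt : Set (ℝ × ℝ) := {p | p.1 ∈ S t ∧ φ p.1 < p.2 ∧ p.2 ≤ φ p.1 + htt} with hTtdef
    have hTtmeas : MeasurableSet Tt := by
      have h1 : MeasurableSet {p : ℝ × ℝ | p.1 ∈ S t} := measurable_fst (hSmeas t)
      have h2 : MeasurableSet {p : ℝ × ℝ | φ p.1 < p.2} :=
        measurableSet_lt (hφcont.measurable.comp measurable_fst) measurable_snd
      have h3 : MeasurableSet {p : ℝ × ℝ | p.2 ≤ φ p.1 + htt} :=
        measurableSet_le measurable_snd ((hφcont.measurable.comp measurable_fst).add_const _)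
      exact h1.inter (h2.inter h3)
    -- containment
    have hcont : {a | t ≤ f a} ∩ B ⊆ Complex.measurableEquivRealProd ⁻¹' Tt := by
      rintro z ⟨hfz, hzB⟩
      have hdz : 0 < z.im - φ z.re := (hBdata z hzB).2.1
      have hsubS : Set.Icc (z.re - c * (z.im - φ z.re)) (z.re + c * (z.im - φ z.re)) ⊆ S t := by
        intro s hs
        refine ⟨hIcc z hzB hs, ?_⟩
        calc ENNReal.ofReal t ≤ ENNReal.ofReal (f z) := ENNReal.ofReal_le_ofReal hfz
        _ ≤ F (bmap φ s) := hpt z hzB s hs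
      have hvol : ENNReal.ofReal (2 * c * (z.im - φ z.re)) ≤ V := by
        have h1 : volume (Set.Icc (z.re - c * (z.im - φ z.re)) (z.re + c * (z.im - φ z.re)))
            ≤ volume (S t) := measure_mono hsubS
        rw [Real.volume_Icc] at h1
        calc ENNReal.ofReal (2 * c * (z.im - φ z.re))
            = ENNReal.ofReal (z.re + c * (z.im - φ z.re) - (z.re - c * (z.im - φ z.re))) := by
              ring_nf
        _ ≤ V := h1
      have hdzle : z.im - φ z.re ≤ htt := by
        have h2 : 2 * c * (z.im - φ z.re) ≤ V.toReal :=
          (ENNReal.ofReal_le_iff_le_toReal (hSfin t)).1 hvol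
        rw [httdef, le_div_iff₀ h2cpos]
        linarith
      have hreS : z.re ∈ S t := by
        apply hsubS
        constructor <;> nlinarith
      show Complex.measurableEquivRealProd z ∈ Tt
      rw [Complex.measurableEquivRealProd_apply]
      exact ⟨hreS, by simpa [gDomain] using hBΩ hzB, by linarith⟩
    -- volume of the tent
    have htent : volume (Complex.measurableEquivRealProd ⁻¹' Tt)
        ≤ ENNReal.ofReal htt * V := by
      have hpre : volume (Complex.measurableEquivRealProd ⁻¹' Tt) = (volume.prod volume) Tt := by
        rw [← Measure.volume_eq_prod]
        exact Complex.volume_preserving_equiv_real_prod.measure_preimage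
          hTtmeas.nullMeasurableSet
      rw [hpre, Measure.prod_apply hTtmeas]
      have hsec : ∀ x : ℝ, volume (Prod.mk x ⁻¹' Tt)
          ≤ (S t).indicator (fun _ => ENNReal.ofReal htt) x := by
        intro x
        by_cases hx : x ∈ S t
        · rw [Set.indicator_of_mem hx]
          have hss : Prod.mk x ⁻¹' Tt ⊆ Set.Ioc (φ x) (φ x + htt) := fun y hy => ⟨hy.2.1, hy.2.2⟩
          calc volume (Prod.mk x ⁻¹' Tt) ≤ volume (Set.Ioc (φ x) (φ x + htt)) :=
                measure_mono hss
          _ = ENNReal.ofReal (φ x + htt - φ x) := Real.volume_Ioc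
          _ = ENNReal.ofReal htt := by ring_nf
        · rw [Set.indicator_of_notMem hx]
          have hemp : Prod.mk x ⁻¹' Tt = ∅ := by
            ext y
            simp only [Set.mem_preimage, hTtdef, Set.mem_setOf_eq, Set.mem_empty_iff_false,
              iff_false]
            rintro ⟨hx', _⟩
            exact hx hx'
          rw [hemp, measure_empty]
      calc ∫⁻ x, volume (Prod.mk x ⁻¹' Tt) ∂volume
          ≤ ∫⁻ x, (S t).indicator (fun _ => ENNReal.ofReal htt) x ∂volume := lintegral_mono hsec
      _ = ∫⁻ _ in S t, ENNReal.ofReal htt ∂volume := lintegral_indicator (hSmeas t) _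
      _ = ENNReal.ofReal htt * V := setLIntegral_const _ _
    -- assembling
    have hmeasf : (volume.restrict B) {a | t ≤ f a} ≤ ENNReal.ofReal htt * V := by
      rw [Measure.restrict_apply (measurableSet_le measurable_const hfmeas)]
      exact (measure_mono hcont).trans htent
    have hofr : ENNReal.ofReal htt = V * (ENNReal.ofReal (2 * c))⁻¹ := by
      rw [httdef, ENNReal.ofReal_div_of_pos h2cpos, ENNReal.ofReal_toReal (hSfin t),
        div_eq_mul_inv]
    have h2t : ENNReal.ofReal (2 * t) = 2 * ENNReal.ofReal t := by
      rw [ENNReal.ofReal_mul (by norm_num : (0:ℝ) ≤ 2)]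
      norm_num
    calc (volume.restrict B) {a | t ≤ f a} * ENNReal.ofReal (2 * t)
        ≤ ENNReal.ofReal htt * V * ENNReal.ofReal (2 * t) :=
          mul_le_mul_left hmeasf _
    _ = (ENNReal.ofReal t * V) * (2 * (ENNReal.ofReal (2 * c))⁻¹ * V) := by
          rw [hofr, h2t]; ring
    _ ≤ A * (2 * (ENNReal.ofReal (2 * c))⁻¹ * V) := mul_le_mul_left (hCheb t) _
    _ = C * V := by rw [hCdef]; ring
  -- layer cake
  have hint : ∀ x : ℝ, (∫ s in (0:ℝ)..x, 2 * s) = x ^ 2 := by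
    intro x
    rw [intervalIntegral.integral_const_mul, integral_id]
    ring
  have hlc := lintegral_comp_eq_lintegral_meas_le_mul (volume.restrict B)
    (f := f) (g := fun s => 2 * s) (Filter.Eventually.of_forall hfnn) hfmeas.aemeasurable
    (fun s _ => (continuous_const.mul continuous_id).intervalIntegrable 0 s)
    (by
      filter_upwards [ae_restrict_mem measurableSet_Ioi] with s hs
      have : (0:ℝ) < s := hs
      linarith)
  calc (∫⁻ z in B, ENNReal.ofReal (‖grad u z‖ ^ 2) ∂volume)
      = ∫⁻ z in B, ENNReal.ofReal (∫ s in (0:ℝ)..f z, 2 * s) ∂volume := by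
        apply lintegral_congr
        intro z
        rw [hint (f z)]
  _ = ∫⁻ t in Set.Ioi 0, (volume.restrict B) {a | t ≤ f a} * ENNReal.ofReal (2 * t) := hlc
  _ ≤ ∫⁻ t in Set.Ioi 0, C * volume ((fun s => (t, s)) ⁻¹' T2) := by
      apply lintegral_mono_ae
      filter_upwards [ae_restrict_mem measurableSet_Ioi] with t ht
      have hseq : (fun s => (t, s)) ⁻¹' T2 = S t := by
        ext s
        simp only [Set.mem_preimage, hT2def, Set.mem_setOf_eq, hSdef]
        have : (0:ℝ) < t := ht
        tauto
      rw [hseq]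
      exact hbound t ht
  _ ≤ ∫⁻ t, C * volume ((fun s => (t, s)) ⁻¹' T2) ∂volume := setLIntegral_le_lintegral _ _
  _ = C * ∫⁻ t, volume ((fun s => (t, s)) ⁻¹' T2) ∂volume :=
      lintegral_const_mul' C _ hCne
  _ = C * (volume.prod volume) T2 := by rw [Measure.prod_apply hT2meas]
  _ ≤ C * A := mul_le_mul_right hfub C
  _ < ⊤ := ENNReal.mul_lt_top hCne.lt_top hAfin
end
end

section
/- Let Ω, N, D be a standard Lipschitz graph domain for the mixed problem with Lipschitz constant M > 0, set β = arctan M, and assume β < π/4. Then for every ε with 2β/(π − 2β) < ε < 1 there exist β₀ = β₀(ε, M) with β < β₀ < (π − 2β)/2 and λ ∈ ℝ such that the vector field α(z) = (Re(e^{iλ} z^ε), Im(e^{iλ} z^ε)) satisfies −|x|^ε ≤ α(x)·ν(x) < −|x|^ε · sin(β₀ − β) for a.e. x ∈ N, and |x|^ε ≥ α(x)·ν(x) > |x|^ε · sin(β₀ − β) for a.e. x ∈ D. -/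
open MeasureTheory Filter Set
open scoped ENNReal Topology Real NNReal

noncomputable section

-- helper lemmas to insert above the theorem
lemma sin_lt_sin_aux {c B : ℝ} (hc0 : 0 ≤ c) (hc : c < π / 2)
    (h1 : c < B) (h2 : B < π - c) : Real.sin c < Real.sin B := by
  have hπ := Real.pi_pos
  rcases le_or_gt B (π / 2) with h | h
  · exact Real.strictMonoOn_sin ⟨by linarith, by linarith⟩ ⟨by linarith, h⟩ h1
  · rw [← Real.sin_pi_sub B]
    exact Real.strictMonoOn_sin ⟨by linarith, by linarith⟩ ⟨by linarith, by linarith⟩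
      (by linarith)

lemma argB_eq_of_re_pos {x : ℂ} (hx : 0 < x.re) :
    argB x = Real.arctan (x.im / x.re) := by
  have h1 : -(π / 2) < Complex.arg x := Complex.neg_pi_div_two_lt_arg_iff.2 (Or.inl hx)
  have h2 : Complex.arg x < π / 2 := Complex.arg_lt_pi_div_two_iff.2 (Or.inl hx)
  rw [argB, if_neg (not_lt.2 h1.le), ← Complex.tan_arg, Real.arctan_tan h1 h2]

lemma argB_eq_of_re_neg {x : ℂ} (hx : x.re < 0) :
    argB x = Real.arctan (x.im / x.re) + π := by
  have hπ := Real.pi_pos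
  rcases le_or_gt 0 x.im with him | him
  · have h1 : -(π / 2) ≤ Complex.arg x :=
      Complex.neg_pi_div_two_le_arg_iff.2 (Or.inr him)
    have h2 : ¬ Complex.arg x ≤ π / 2 := by
      rw [Complex.arg_le_pi_div_two_iff]
      push_neg
      exact ⟨hx, him⟩
    have h2' : π / 2 < Complex.arg x := not_le.1 h2
    have h3 : Complex.arg x ≤ π := Complex.arg_le_pi x
    have htan : Real.tan (Complex.arg x - π) = x.im / x.re := by
      rw [Real.tan_periodic.sub_eq, Complex.tan_arg]
    have : Real.arctan (x.im / x.re) = Complex.arg x - π := by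
      rw [← htan, Real.arctan_tan (by linarith) (by linarith)]
    rw [argB, if_neg (not_lt.2 h1)]
    linarith
  · have h1 : Complex.arg x < -(π / 2) := by
      by_contra h
      rcases Complex.neg_pi_div_two_le_arg_iff.1 (not_lt.1 h) with h' | h'
      · exact hx.not_ge h'
      · exact him.not_ge h'
    have h3 : -π < Complex.arg x := Complex.neg_pi_lt_arg x
    have htan : Real.tan (Complex.arg x + π) = x.im / x.re := by
      rw [Real.tan_periodic, Complex.tan_arg]
    have : Real.arctan (x.im / x.re) = Complex.arg x + π := by
      rw [← htan, Real.arctan_tan (by linarith) (by linarith)]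
    rw [argB, if_pos h1]
    linarith

lemma dot_formula (φ : ℝ → ℝ) (ε lam : ℝ) (x : ℂ) :
    dotR (Complex.exp (Complex.I * lam) * cpowB ε x) (nuVec φ x)
      = -(‖x‖ ^ ε) *
          Real.sin (lam + ε * argB x - Real.arctan (deriv φ x.re)) := by
  set r : ℝ := ‖x‖ ^ ε with hr
  set d : ℝ := deriv φ x.re with hd
  set A : ℝ := lam + ε * argB x with hA
  have hs : (0:ℝ) < Real.sqrt (1 + d ^ 2) := Real.sqrt_pos.2 (by nlinarith [sq_nonneg d])
  have hα : Complex.exp (Complex.I * lam) * cpowB ε x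
      = (r : ℂ) * Complex.exp ((A : ℝ) * Complex.I) := by
    have hexp : ((A : ℝ) : ℂ) * Complex.I
        = Complex.I * lam + Complex.I * ((ε * argB x : ℝ) : ℂ) := by
      rw [hA]; push_cast; ring
    rw [cpowB, ← hr, hexp, Complex.exp_add]
    ring
  have hre : (Complex.exp (Complex.I * lam) * cpowB ε x).re = r * Real.cos A := by
    rw [hα]
    simp [Complex.exp_ofReal_mul_I_re, Complex.exp_ofReal_mul_I_im]
  have him : (Complex.exp (Complex.I * lam) * cpowB ε x).im = r * Real.sin A := by
    rw [hα]
    simp [Complex.exp_ofReal_mul_I_re, Complex.exp_ofReal_mul_I_im]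
  have hνre : (nuVec φ x).re = (Real.sqrt (1 + d ^ 2))⁻¹ * d := by
    simp [nuVec, Complex.smul_re, ← hd]
  have hνim : (nuVec φ x).im = (Real.sqrt (1 + d ^ 2))⁻¹ * (-1) := by
    simp [nuVec, Complex.smul_im, ← hd]
  rw [dotR, hre, him, hνre, hνim, Real.sin_sub, Real.sin_arctan, Real.cos_arctan]
  rw [Real.sin_add, Real.cos_add] at *
  field_simp
  ring

/-- construction of the holomorphic vector field `α(z) = e^{iλ} z^ε` for the
mixed problem, with `α·ν` strictly negative (of size `|x|^ε`) on `N` and strictly positive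
on `D`. -/
theorem statement13 (φ : ℝ → ℝ) (M : ℝ)
    (hφ : ∀ s t, |φ s - φ t| ≤ M * |s - t|) (hφ0 : φ 0 = 0) (hM : 0 < M)
    (hβ : Real.arctan M < π / 4)
    (ε : ℝ) (hε1 : 2 * Real.arctan M / (π - 2 * Real.arctan M) < ε) (hε2 : ε < 1) :
    ∃ β₀ lam : ℝ, Real.arctan M < β₀ ∧ β₀ < (π - 2 * Real.arctan M) / 2 ∧
      (∀ᵐ x ∂(sigma0 φ), x ∈ Nside φ →
        -(‖x‖ ^ ε)
            ≤ dotR (Complex.exp (Complex.I * lam) * cpowB ε x) (nuVec φ x) ∧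
          dotR (Complex.exp (Complex.I * lam) * cpowB ε x) (nuVec φ x)
            < -(‖x‖ ^ ε * Real.sin (β₀ - Real.arctan M))) ∧
      (∀ᵐ x ∂(sigma0 φ), x ∈ Dside φ →
        dotR (Complex.exp (Complex.I * lam) * cpowB ε x) (nuVec φ x)
            ≤ ‖x‖ ^ ε ∧
          ‖x‖ ^ ε * Real.sin (β₀ - Real.arctan M)
            < dotR (Complex.exp (Complex.I * lam) * cpowB ε x) (nuVec φ x)) := by

  have hπ := Real.pi_pos
  set β : ℝ := Real.arctan M with hβdef
  have hβpos : 0 < β := by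
    have := Real.arctan_strictMono hM
    rwa [Real.arctan_zero] at this
  have hπβ : 0 < π - 2 * β := by linarith
  have hkey : 2 * β < ε * (π - 2 * β) := by
    rw [div_lt_iff₀ hπβ] at hε1
    linarith
  have hεpos : 0 < ε := by
    have h' : 0 ≤ 2 * β / (π - 2 * β) := div_nonneg (by linarith) hπβ.le
    linarith
  set β₀ : ℝ := (β + ε * (π - 2 * β) / 2) / 2 with hβ₀def
  set lam : ℝ := π - ε * π / 2 with hlamdef
  have hββ₀ : β < β₀ := by rw [hβ₀def]; linarith
  have hβ₀lt : β₀ < ε * (π - 2 * β) / 2 := by rw [hβ₀def]; linarith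
  have hεππ : ε * π < π := mul_lt_of_lt_one_left hπ hε2
  have hβ₀2 : β₀ < (π - 2 * β) / 2 := by
    have : ε * (π - 2 * β) < π - 2 * β := mul_lt_of_lt_one_left hπβ hε2
    rw [hβ₀def]; linarith
  set c : ℝ := β₀ - β with hcdef
  have hc0 : 0 < c := by linarith
  have hcπ : c < π / 2 := by
    have : β₀ < π / 2 := by linarith
    linarith
  -- Lipschitz bound on the derivative
  have hlip : LipschitzWith ⟨M, hM.le⟩ φ :=
    LipschitzWith.of_dist_le_mul fun s t => by
      simp only [Real.dist_eq]; exact hφ s t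
  have hderiv : ∀ t, |deriv φ t| ≤ M := fun t => by
    have := norm_deriv_le_of_lipschitz (𝕜 := ℝ) (x₀ := t) hlip
    simp at this; exact this
  have harctan_abs : ∀ u : ℝ, |u| ≤ M → |Real.arctan u| ≤ β := by
    intro u hu
    rw [abs_le] at hu ⊢
    constructor
    · have := Real.arctan_strictMono.monotone hu.1
      rwa [Real.arctan_neg] at this
    · exact Real.arctan_strictMono.monotone hu.2
  -- slope bound
  have hslope : ∀ t : ℝ, t ≠ 0 → |φ t / t| ≤ M := by
    intro t ht
    rw [abs_div]
    rw [div_le_iff₀ (abs_pos.2 ht)]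
    simpa [hφ0] using hφ t 0
  -- pointwise claim on N
  have hN : ∀ x : ℂ, x ≠ 0 → x ∈ Nside φ →
      -(‖x‖ ^ ε)
          ≤ dotR (Complex.exp (Complex.I * lam) * cpowB ε x) (nuVec φ x) ∧
        dotR (Complex.exp (Complex.I * lam) * cpowB ε x) (nuVec φ x)
          < -(‖x‖ ^ ε * Real.sin c) := by
    intro x hx0 hxN
    obtain ⟨hxim, hxre⟩ := hxN
    have hre : 0 < x.re := by
      rcases hxre.lt_or_eq with h | h
      · exact h
      · exfalso; apply hx0; apply Complex.ext <;> simp [← h, hxim, hφ0]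
    have hrpos : 0 < ‖x‖ ^ ε :=
      Real.rpow_pos_of_pos (norm_pos_iff.mpr hx0) ε
    set θ' : ℝ := Real.arctan (x.im / x.re) with hθ'
    have hθβ : |θ'| ≤ β := by
      apply harctan_abs
      rw [hxim]
      exact hslope x.re hre.ne'
    set ψ : ℝ := Real.arctan (deriv φ x.re) with hψ
    have hψβ : |ψ| ≤ β := harctan_abs _ (hderiv x.re)
    have hargB : argB x = θ' := argB_eq_of_re_pos hre
    have hdot := dot_formula φ ε lam x
    rw [hargB] at hdot
    set B : ℝ := lam + ε * θ' - ψ with hB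
    rw [abs_le] at hθβ hψβ
    have hεθ1 : ε * (-β) ≤ ε * θ' := mul_le_mul_of_nonneg_left hθβ.1 hεpos.le
    have hεθ2 : ε * θ' ≤ ε * β := mul_le_mul_of_nonneg_left hθβ.2 hεpos.le
    have hring : ε * (π - 2 * β) / 2 = ε * π / 2 - ε * β := by ring
    have hring2 : ε * (-β) = -(ε * β) := by ring
    have hBl : c < B := by
      rw [hB, hlamdef, hcdef]
      linarith
    have hBu : B < π - c := by
      rw [hB, hlamdef, hcdef]
      linarith
    have hsin : Real.sin c < Real.sin B := sin_lt_sin_aux hc0.le hcπ hBl hBu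
    rw [hdot]
    have h1 : ‖x‖ ^ ε * Real.sin B ≤ ‖x‖ ^ ε * 1 :=
      mul_le_mul_of_nonneg_left (Real.sin_le_one B) hrpos.le
    have h2 : ‖x‖ ^ ε * Real.sin c < ‖x‖ ^ ε * Real.sin B :=
      mul_lt_mul_of_pos_left hsin hrpos
    constructor
    · linarith
    · linarith
  -- pointwise claim on D
  have hD : ∀ x : ℂ, x ∈ Dside φ →
      dotR (Complex.exp (Complex.I * lam) * cpowB ε x) (nuVec φ x)
          ≤ ‖x‖ ^ ε ∧
        ‖x‖ ^ ε * Real.sin c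
          < dotR (Complex.exp (Complex.I * lam) * cpowB ε x) (nuVec φ x) := by
    intro x hxD
    obtain ⟨hxim, hre⟩ := hxD
    have hx0 : x ≠ 0 := by
      intro h
      rw [h] at hre
      simp at hre
    have hrpos : 0 < ‖x‖ ^ ε :=
      Real.rpow_pos_of_pos (norm_pos_iff.mpr hx0) ε
    set θ' : ℝ := Real.arctan (x.im / x.re) with hθ'
    have hθβ : |θ'| ≤ β := by
      apply harctan_abs
      rw [hxim]
      exact hslope x.re hre.ne
    set ψ : ℝ := Real.arctan (deriv φ x.re) with hψ
    have hψβ : |ψ| ≤ β := harctan_abs _ (hderiv x.re)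
    have hargB : argB x = θ' + π := argB_eq_of_re_neg hre
    have hdot := dot_formula φ ε lam x
    rw [hargB] at hdot
    set B : ℝ := lam + ε * (θ' + π) - ψ with hB
    have hsinB : Real.sin B = -Real.sin (B - π) := by
      rw [Real.sin_sub_pi, neg_neg]
    rw [abs_le] at hθβ hψβ
    have hεθ1 : ε * (-β) ≤ ε * θ' := mul_le_mul_of_nonneg_left hθβ.1 hεpos.le
    have hεθ2 : ε * θ' ≤ ε * β := mul_le_mul_of_nonneg_left hθβ.2 hεpos.le
    have hring : ε * (π - 2 * β) / 2 = ε * π / 2 - ε * β := by ring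
    have hring2 : ε * (-β) = -(ε * β) := by ring
    have hring3 : ε * (θ' + π) = ε * θ' + ε * π := by ring
    have hBl : c < B - π := by
      rw [hB, hlamdef, hcdef, hring3]
      linarith
    have hBu : B - π < π - c := by
      rw [hB, hlamdef, hcdef, hring3]
      linarith
    have hsin : Real.sin c < Real.sin (B - π) := sin_lt_sin_aux hc0.le hcπ hBl hBu
    rw [hdot, hsinB]
    have h1 : ‖x‖ ^ ε * Real.sin (B - π) ≤ ‖x‖ ^ ε * 1 :=
      mul_le_mul_of_nonneg_left (Real.sin_le_one (B - π)) hrpos.le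
    have h2 : ‖x‖ ^ ε * Real.sin c < ‖x‖ ^ ε * Real.sin (B - π) :=
      mul_lt_mul_of_pos_left hsin hrpos
    constructor
    · linarith
    · linarith
  -- a.e. nonzero
  have hφc : Continuous φ := hlip.continuous
  have hbm : Continuous (bmap φ) := by
    have hb : bmap φ = fun t : ℝ => (t : ℂ) + (φ t : ℂ) * Complex.I := by
      funext t
      apply Complex.ext <;> simp [bmap]
    rw [hb]
    exact Complex.continuous_ofReal.add
      ((Complex.continuous_ofReal.comp hφc).mul continuous_const)
  have h0 : ∀ᵐ x ∂(sigma0 φ), x ≠ 0 := by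
    rw [ae_iff]
    have hset : {x : ℂ | ¬ x ≠ 0} = {0} := by ext; simp
    rw [hset, sigma0, Measure.map_apply hbm.measurable (measurableSet_singleton 0)]
    have hsub : bmap φ ⁻¹' {0} ⊆ ({0} : Set ℝ) := by
      intro t ht
      simp only [Set.mem_preimage, Set.mem_singleton_iff] at ht ⊢
      have := congrArg Complex.re ht
      simpa [bmap] using this
    have hz : (volume.withDensity fun t =>
        ENNReal.ofReal (Real.sqrt (1 + deriv φ t ^ 2))) ({0} : Set ℝ) = 0 :=
      withDensity_absolutelyContinuous volume _ (measure_singleton 0)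
    exact le_antisymm ((measure_mono hsub).trans hz.le) zero_le
  refine ⟨β₀, lam, hββ₀, hβ₀2, ?_, ?_⟩
  · filter_upwards [h0] with x hx hxN
    exact hN x hx hxN
  · exact ae_of_all _ hD
end
end
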